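/- For every integer g ≥ 2, the set D_g is finite and its cardinality is at most (185g − 185)(185g − 186)(185g − 187)/6. -/

import Mathlib

set_option maxHeartbeats 1000000

/-- `N` is a repdigit in base `g` with at least two digits:
`N = d * (g^k - 1)/(g-1)` for some digit `1 ≤ d ≤ g-1` and some `k ≥ 2`. -/
def Repdigit (g N : ℕ) : Prop :=
  0 < N ∧ ∃ d k : ℕ, 1 ≤ d ∧ d ≤ g - 1 ∧ 2 ≤ k ∧ N * (g - 1) = d * (g ^ k - 1)

/-- The set of Diophantine triples with values in the repdigits in base `g`. -/
def DioTriples (g : ℕ) : Set (ℕ × ℕ × ℕ) :=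
  {p | 0 < p.2.2 ∧ p.2.2 < p.2.1 ∧ p.2.1 < p.1 ∧
    Repdigit g (p.1 * p.2.1 + 1) ∧ Repdigit g (p.1 * p.2.2 + 1) ∧
    Repdigit g (p.2.1 * p.2.2 + 1)}


lemma repd_shift {w d kk N : ℕ} (h : (N + 1) * (w + 1) = d * ((w + 2) ^ kk - 1)) :
    (N + 1) * (w + 1) + d = d * (w + 2) ^ kk := by
  have hpow : 1 ≤ (w + 2) ^ kk := Nat.one_le_pow _ _ (by omega)
  obtain ⟨t, ht⟩ := Nat.exists_eq_add_of_le hpow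
  have h' : 1 + t - 1 = t := by omega
  rw [ht, h'] at h
  rw [ht, h]; ring

lemma key {w a b c d1 k d2 l d3 m : ℕ}
    (hc : 0 < c) (hcb : c < b) (hba : b < a)
    (hd1 : 1 ≤ d1) (hd1' : d1 ≤ w + 1)
    (H1 : (a * b + 1) * (w + 1) + d1 = d1 * (w + 2) ^ k)
    (hd2 : 1 ≤ d2) (hd2' : d2 ≤ w + 1)
    (H2 : (a * c + 1) * (w + 1) + d2 = d2 * (w + 2) ^ l)
    (hd3 : 1 ≤ d3) (hd3' : d3 ≤ w + 1)
    (H3 : (b * c + 1) * (w + 1) + d3 = d3 * (w + 2) ^ m) :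
    c < 2 * (w + 2) ∧ l < 8 ∧ m < 8 ∧ a < 16 * (w + 1) ^ 4 := by
  have ha3 : 3 ≤ a := by omega
  -- l ≤ k
  have hlk : l ≤ k := by
    by_contra hcon
    push_neg at hcon
    have hab' : a * (c + 1) ≤ a * b := Nat.mul_le_mul_left a (by omega)
    have hab : a * c + a ≤ a * b := by
      calc a * c + a = a * (c + 1) := by ring
        _ ≤ a * b := hab'
    have h1 : d2 * (w + 2) ^ l < d1 * (w + 2) ^ k := by
      rw [← H1, ← H2]
      have key1 : (a * c + 2) * (w + 1) ≤ (a * b + 1) * (w + 1) :=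
        Nat.mul_le_mul_right _ (by omega)
      calc (a * c + 1) * (w + 1) + d2 ≤ (a * c + 1) * (w + 1) + (w + 1) := by omega
        _ = (a * c + 2) * (w + 1) := by ring
        _ ≤ (a * b + 1) * (w + 1) := key1
        _ < (a * b + 1) * (w + 1) + d1 := by omega
    have p1 : (w + 2) ^ (k + 1) ≤ (w + 2) ^ l := Nat.pow_le_pow_right (by omega) (by omega)
    have p0 : 0 < (w + 2) ^ k := Nat.pow_pos (by omega)
    have h2 : d1 * (w + 2) ^ k < 1 * (w + 2) ^ l := by
      calc d1 * (w + 2) ^ k ≤ (w + 1) * (w + 2) ^ k := Nat.mul_le_mul_right _ hd1'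
        _ < (w + 2) * (w + 2) ^ k := (Nat.mul_lt_mul_right p0).mpr (by omega)
        _ = (w + 2) ^ (k + 1) := by ring
        _ ≤ (w + 2) ^ l := p1
        _ = 1 * (w + 2) ^ l := (one_mul _).symm
    have h3 : 1 * (w + 2) ^ l ≤ d2 * (w + 2) ^ l := Nat.mul_le_mul_right _ hd2
    omega
  -- m ≤ l
  have hml : m ≤ l := by
    by_contra hcon
    push_neg at hcon
    have hab' : (b + 1) * c ≤ a * c := Nat.mul_le_mul_right c (by omega)
    have hab : b * c + c ≤ a * c := by
      calc b * c + c = (b + 1) * c := by ring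
        _ ≤ a * c := hab'
    have h1 : d3 * (w + 2) ^ m < d2 * (w + 2) ^ l := by
      rw [← H2, ← H3]
      have key1 : (b * c + 2) * (w + 1) ≤ (a * c + 1) * (w + 1) :=
        Nat.mul_le_mul_right _ (by omega)
      calc (b * c + 1) * (w + 1) + d3 ≤ (b * c + 1) * (w + 1) + (w + 1) := by omega
        _ = (b * c + 2) * (w + 1) := by ring
        _ ≤ (a * c + 1) * (w + 1) := key1
        _ < (a * c + 1) * (w + 1) + d2 := by omega
    have p1 : (w + 2) ^ (l + 1) ≤ (w + 2) ^ m := Nat.pow_le_pow_right (by omega) (by omega)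
    have p0 : 0 < (w + 2) ^ l := Nat.pow_pos (by omega)
    have h2 : d2 * (w + 2) ^ l < 1 * (w + 2) ^ m := by
      calc d2 * (w + 2) ^ l ≤ (w + 1) * (w + 2) ^ l := Nat.mul_le_mul_right _ hd2'
        _ < (w + 2) * (w + 2) ^ l := (Nat.mul_lt_mul_right p0).mpr (by omega)
        _ = (w + 2) ^ (l + 1) := by ring
        _ ≤ (w + 2) ^ m := p1
        _ = 1 * (w + 2) ^ m := (one_mul _).symm
    have h3 : 1 * (w + 2) ^ m ≤ d3 * (w + 2) ^ m := Nat.mul_le_mul_right _ hd3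
    omega
  obtain ⟨k1, rfl⟩ := Nat.exists_eq_add_of_le hlk
  obtain ⟨l1, rfl⟩ := Nat.exists_eq_add_of_le hml
  -- integer versions
  have Z1 : ((a : ℤ) * b + 1) * ((w : ℤ) + 1) + d1 = d1 * ((w : ℤ) + 2) ^ (m + l1 + k1) := by
    exact_mod_cast H1
  have Z2 : ((a : ℤ) * c + 1) * ((w : ℤ) + 1) + d2 = d2 * ((w : ℤ) + 2) ^ (m + l1) := by
    exact_mod_cast H2
  have Z3 : ((b : ℤ) * c + 1) * ((w : ℤ) + 1) + d3 = d3 * ((w : ℤ) + 2) ^ m := by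
    exact_mod_cast H3
  set G : ℤ := (w : ℤ) + 2 with hG
  have hGpos : (0 : ℤ) < G := by positivity
  have hcZ : (1 : ℤ) ≤ (c : ℤ) := by exact_mod_cast hc
  have hcbZ : (c : ℤ) < b := by exact_mod_cast hcb
  have hbaZ : (b : ℤ) < a := by exact_mod_cast hba
  have hd1Z : (1 : ℤ) ≤ (d1 : ℤ) := by exact_mod_cast hd1
  have hd1Z' : (d1 : ℤ) ≤ (w : ℤ) + 1 := by exact_mod_cast hd1'
  have hd2Z : (1 : ℤ) ≤ (d2 : ℤ) := by exact_mod_cast hd2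
  have hd2Z' : (d2 : ℤ) ≤ (w : ℤ) + 1 := by exact_mod_cast hd2'
  have hd3Z : (1 : ℤ) ≤ (d3 : ℤ) := by exact_mod_cast hd3
  have hd3Z' : (d3 : ℤ) ≤ (w : ℤ) + 1 := by exact_mod_cast hd3'
  have hwZ : (0 : ℤ) ≤ (w : ℤ) := Int.natCast_nonneg w
  -- IdX
  have IdX : (c : ℤ) * d1 * G ^ (m + l1 + k1) - (b : ℤ) * d2 * G ^ (m + l1)
      = (c : ℤ) * ((d1 : ℤ) + ((w : ℤ) + 1)) - (b : ℤ) * ((d2 : ℤ) + ((w : ℤ) + 1)) := by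
    linear_combination (b : ℤ) * Z2 - (c : ℤ) * Z1
  have hdvdX : G ^ (m + l1) ∣
      ((b : ℤ) * ((d2 : ℤ) + ((w : ℤ) + 1)) - (c : ℤ) * ((d1 : ℤ) + ((w : ℤ) + 1))) := by
    refine ⟨(b : ℤ) * d2 - (c : ℤ) * d1 * G ^ k1, ?_⟩
    linear_combination IdX
  have hX0 : (b : ℤ) * ((d2 : ℤ) + ((w : ℤ) + 1)) - (c : ℤ) * ((d1 : ℤ) + ((w : ℤ) + 1)) ≠ 0 := by
    intro h0
    have hx : (b : ℤ) * ((d2 : ℤ) + ((w : ℤ) + 1)) = (c : ℤ) * ((d1 : ℤ) + ((w : ℤ) + 1)) :=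
      sub_eq_zero.mp h0
    have hGm : G ^ (m + l1) ≠ 0 := pow_ne_zero _ (by positivity)
    have hA : (c : ℤ) * d1 * G ^ k1 = (b : ℤ) * d2 := by
      have h2 : ((c : ℤ) * d1 * G ^ k1) * G ^ (m + l1) = ((b : ℤ) * d2) * G ^ (m + l1) := by
        linear_combination IdX - hx
      exact mul_right_cancel₀ hGm h2
    rcases Nat.eq_zero_or_pos k1 with hk1 | hk1
    · subst hk1
      simp only [pow_zero, mul_one] at hA
      have hbc : (b : ℤ) * ((w : ℤ) + 1) = (c : ℤ) * ((w : ℤ) + 1) := by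
        have e1 : (b : ℤ) * ((d2 : ℤ) + ((w : ℤ) + 1)) = (b:ℤ)*d2 + (b:ℤ)*((w:ℤ)+1) := by ring
        have e2 : (c : ℤ) * ((d1 : ℤ) + ((w : ℤ) + 1)) = (c:ℤ)*d1 + (c:ℤ)*((w:ℤ)+1) := by ring
        rw [e1, e2] at hx
        linarith [hx, hA]
      have hbceq : (b : ℤ) = (c : ℤ) := mul_right_cancel₀ (by positivity) hbc
      have : b = c := by exact_mod_cast hbceq
      omega
    · have hbpos : (0 : ℤ) < (b : ℤ) := by linarith
      have hbcne : ((b : ℤ) * c) ≠ 0 := by positivity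
      have hGk : G ≤ G ^ k1 := le_self_pow₀ (by linarith) (by omega)
      have h5 : (c : ℤ) * ((d1 : ℤ) + ((w : ℤ) + 1)) < (b : ℤ) * ((d1 : ℤ) + ((w : ℤ) + 1)) :=
        mul_lt_mul_of_pos_right hcbZ (by linarith)
      have h6 : (b : ℤ) * ((d2 : ℤ) + ((w : ℤ) + 1)) < (b : ℤ) * ((d1 : ℤ) + ((w : ℤ) + 1)) := by
        rw [hx]; exact h5
      have hd2d1 : (d2 : ℤ) < d1 := by
        have h7 : ((d2 : ℤ) + ((w : ℤ) + 1)) * (b:ℤ) < ((d1 : ℤ) + ((w : ℤ) + 1)) * (b:ℤ) := by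
          calc ((d2 : ℤ) + ((w : ℤ) + 1)) * (b:ℤ) = (b : ℤ) * ((d2 : ℤ) + ((w : ℤ) + 1)) := by ring
            _ < (b : ℤ) * ((d1 : ℤ) + ((w : ℤ) + 1)) := h6
            _ = ((d1 : ℤ) + ((w : ℤ) + 1)) * (b:ℤ) := by ring
        have := lt_of_mul_lt_mul_right h7 (by linarith)
        linarith
      have hkey2 : (d2 : ℤ) * ((d1 : ℤ) + ((w : ℤ) + 1))
          = (d1 : ℤ) * (((d2 : ℤ) + ((w : ℤ) + 1)) * G ^ k1) := by
        have h4 : ((d2 : ℤ) * ((d1 : ℤ) + ((w : ℤ) + 1))) * ((b : ℤ) * c)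
            = ((d1 : ℤ) * (((d2 : ℤ) + ((w : ℤ) + 1)) * G ^ k1)) * ((b : ℤ) * c) := by
          linear_combination (-(d1 : ℤ) * c * G ^ k1) * hx + (-(c : ℤ) * ((d1 : ℤ) + ((w : ℤ) + 1))) * hA
        exact mul_right_cancel₀ hbcne h4
      have hrhs : (d1 : ℤ) * (((d2 : ℤ) + ((w : ℤ) + 1)) * G)
          ≤ (d1 : ℤ) * (((d2 : ℤ) + ((w : ℤ) + 1)) * G ^ k1) := by
        apply mul_le_mul_of_nonneg_left _ (by linarith)
        exact mul_le_mul_of_nonneg_left hGk (by linarith)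
      have c1 : (d2 : ℤ) * ((d1 : ℤ) + ((w : ℤ) + 1))
          ≤ ((d1 : ℤ) - 1) * ((d1 : ℤ) + ((w : ℤ) + 1)) :=
        mul_le_mul_of_nonneg_right (by linarith) (by linarith)
      have c2 : ((d1 : ℤ) - 1) * ((d1 : ℤ) + ((w : ℤ) + 1))
          ≤ ((d1 : ℤ) - 1) * (2 * ((w : ℤ) + 1)) :=
        mul_le_mul_of_nonneg_left (by linarith) (by linarith)
      have c3 : (d1 : ℤ) * (((w : ℤ) + 2) * ((w : ℤ) + 2))
          ≤ (d1 : ℤ) * (((d2 : ℤ) + ((w : ℤ) + 1)) * G) := by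
        apply mul_le_mul_of_nonneg_left _ (by linarith)
        rw [hG]
        exact mul_le_mul_of_nonneg_right (by linarith) (by linarith)
      have c4 : (0 : ℤ) ≤ ((d1 : ℤ) - 1) * (((w : ℤ) + 2) * ((w : ℤ) + 2) - 2 * ((w : ℤ) + 1)) :=
        mul_nonneg (by linarith) (by linarith [sq_nonneg ((w : ℤ) + 1)])
      linarith [hkey2, hrhs, c1, c2, c3, c4, mul_nonneg hwZ hwZ]
  have hXle : G ^ (m + l1) ≤
      |(b : ℤ) * ((d2 : ℤ) + ((w : ℤ) + 1)) - (c : ℤ) * ((d1 : ℤ) + ((w : ℤ) + 1))| :=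
    Int.le_of_dvd (abs_pos.mpr hX0) ((dvd_abs _ _).mpr hdvdX)
  have hXub : |(b : ℤ) * ((d2 : ℤ) + ((w : ℤ) + 1)) - (c : ℤ) * ((d1 : ℤ) + ((w : ℤ) + 1))|
      ≤ 2 * (b : ℤ) * ((w : ℤ) + 1) := by
    have m1 : (b : ℤ) * (d2 : ℤ) ≤ (b : ℤ) * ((w : ℤ) + 1) :=
      mul_le_mul_of_nonneg_left hd2Z' (by linarith)
    have m2 : (c : ℤ) * ((d1 : ℤ) + ((w : ℤ) + 1)) ≤ (c : ℤ) * (2 * ((w : ℤ) + 1)) :=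
      mul_le_mul_of_nonneg_left (by linarith) (by linarith)
    have m3 : (c : ℤ) * (2 * ((w : ℤ) + 1)) ≤ (b : ℤ) * (2 * ((w : ℤ) + 1)) :=
      mul_le_mul_of_nonneg_right (by linarith) (by linarith)
    have m4 : (0 : ℤ) ≤ (c : ℤ) * ((d1 : ℤ) + ((w : ℤ) + 1)) :=
      mul_nonneg (by linarith) (by linarith)
    have m5 : (0 : ℤ) ≤ (b : ℤ) * (d2 : ℤ) := mul_nonneg (by linarith) (by linarith)
    rw [abs_le]
    constructor <;> linarith [m1, m2, m3, m4, m5]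
  have hGlb : G ^ (m + l1) ≤ 2 * (b : ℤ) * ((w : ℤ) + 1) := le_trans hXle hXub
  -- a*c < 2*b*(w+1)
  have hacZ : ((a : ℤ) * c) * ((w : ℤ) + 1) < (2 * (b : ℤ) * ((w : ℤ) + 1)) * ((w : ℤ) + 1) := by
    have h1 : (d2 : ℤ) * G ^ (m + l1) ≤ ((w : ℤ) + 1) * G ^ (m + l1) :=
      mul_le_mul_of_nonneg_right hd2Z' (by positivity)
    have h2 : ((w : ℤ) + 1) * G ^ (m + l1) ≤ ((w : ℤ) + 1) * (2 * (b : ℤ) * ((w : ℤ) + 1)) :=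
      mul_le_mul_of_nonneg_left hGlb (by linarith)
    linarith [Z2, h1, h2, hd2Z]
  have hacZ' : (a : ℤ) * c < 2 * (b : ℤ) * ((w : ℤ) + 1) :=
    lt_of_mul_lt_mul_right hacZ (by positivity)
  have hacn : a * c < 2 * b * (w + 1) := by exact_mod_cast hacZ'
  have hc2 : c < 2 * (w + 1) := by
    have h' : a * c < a * (2 * (w + 1)) := by
      calc a * c < 2 * b * (w + 1) := hacn
        _ ≤ 2 * a * (w + 1) := Nat.mul_le_mul_right _ (by omega)
        _ = a * (2 * (w + 1)) := by ring
    -- strictness: b < a gives 2*b*(w+1) < 2*a*(w+1); combined above it's ≤ but we need <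
    exact Nat.lt_of_mul_lt_mul_left h'
  -- the U relation
  have F1 : (a : ℤ) * b * ((w : ℤ) + 1)
      = (d1 : ℤ) * G ^ (m + l1 + k1) - ((d1 : ℤ) + ((w : ℤ) + 1)) := by linear_combination Z1
  have F2 : (a : ℤ) * c * ((w : ℤ) + 1)
      = (d2 : ℤ) * G ^ (m + l1) - ((d2 : ℤ) + ((w : ℤ) + 1)) := by linear_combination Z2
  have F3 : (b : ℤ) * c * ((w : ℤ) + 1)
      = (d3 : ℤ) * G ^ m - ((d3 : ℤ) + ((w : ℤ) + 1)) := by linear_combination Z3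
  have HM : ((d2 : ℤ) * G ^ (m + l1) - ((d2 : ℤ) + ((w : ℤ) + 1)))
        * ((d3 : ℤ) * G ^ m - ((d3 : ℤ) + ((w : ℤ) + 1)))
      = (c : ℤ) ^ 2 * ((w : ℤ) + 1)
        * ((d1 : ℤ) * G ^ (m + l1 + k1) - ((d1 : ℤ) + ((w : ℤ) + 1))) := by
    calc ((d2 : ℤ) * G ^ (m + l1) - ((d2 : ℤ) + ((w : ℤ) + 1)))
          * ((d3 : ℤ) * G ^ m - ((d3 : ℤ) + ((w : ℤ) + 1)))
        = ((a : ℤ) * c * ((w : ℤ) + 1)) * ((b : ℤ) * c * ((w : ℤ) + 1)) := by rw [← F2, ← F3]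
      _ = (c : ℤ) ^ 2 * ((w : ℤ) + 1) * ((a : ℤ) * b * ((w : ℤ) + 1)) := by ring
      _ = _ := by rw [F1]
  have hUdvd : G ^ m ∣ ((c : ℤ) ^ 2 * ((w : ℤ) + 1) * ((d1 : ℤ) + ((w : ℤ) + 1))
      + ((d2 : ℤ) + ((w : ℤ) + 1)) * ((d3 : ℤ) + ((w : ℤ) + 1))) := by
    refine ⟨(c : ℤ) ^ 2 * ((w : ℤ) + 1) * d1 * G ^ (l1 + k1)
      + (d2 : ℤ) * ((d3 : ℤ) + ((w : ℤ) + 1)) * G ^ l1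
      + (d3 : ℤ) * ((d2 : ℤ) + ((w : ℤ) + 1)) - (d2 : ℤ) * d3 * G ^ (m + l1), ?_⟩
    linear_combination HM
  have hUpos : (0 : ℤ) < (c : ℤ) ^ 2 * ((w : ℤ) + 1) * ((d1 : ℤ) + ((w : ℤ) + 1))
      + ((d2 : ℤ) + ((w : ℤ) + 1)) * ((d3 : ℤ) + ((w : ℤ) + 1)) := by
    have u1 : (0 : ℤ) < ((d2 : ℤ) + ((w : ℤ) + 1)) * ((d3 : ℤ) + ((w : ℤ) + 1)) :=
      mul_pos (by linarith) (by linarith)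
    have u2 : (0 : ℤ) ≤ (c : ℤ) ^ 2 * ((w : ℤ) + 1) * ((d1 : ℤ) + ((w : ℤ) + 1)) := by positivity
    linarith
  have hUle : G ^ m ≤ (c : ℤ) ^ 2 * ((w : ℤ) + 1) * ((d1 : ℤ) + ((w : ℤ) + 1))
      + ((d2 : ℤ) + ((w : ℤ) + 1)) * ((d3 : ℤ) + ((w : ℤ) + 1)) := Int.le_of_dvd hUpos hUdvd
  have hbcm : (b : ℤ) * c < G ^ m := by
    have h1 : (d3 : ℤ) * G ^ m ≤ ((w : ℤ) + 1) * G ^ m :=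
      mul_le_mul_of_nonneg_right hd3Z' (by positivity)
    have h2 : ((b : ℤ) * c) * ((w : ℤ) + 1) < (G ^ m) * ((w : ℤ) + 1) := by
      linarith [Z3, h1, hd3Z]
    exact lt_of_mul_lt_mul_right h2 (by linarith)
  have hUub : (c : ℤ) ^ 2 * ((w : ℤ) + 1) * ((d1 : ℤ) + ((w : ℤ) + 1))
      + ((d2 : ℤ) + ((w : ℤ) + 1)) * ((d3 : ℤ) + ((w : ℤ) + 1))
      ≤ 2 * (c : ℤ) ^ 2 * ((w : ℤ) + 1) ^ 2 + 4 * ((w : ℤ) + 1) ^ 2 := by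
    have v1 : (c : ℤ) ^ 2 * ((w : ℤ) + 1) * ((d1 : ℤ) + ((w : ℤ) + 1))
        ≤ (c : ℤ) ^ 2 * ((w : ℤ) + 1) * (2 * ((w : ℤ) + 1)) :=
      mul_le_mul_of_nonneg_left (by linarith) (by positivity)
    have v2 : ((d2 : ℤ) + ((w : ℤ) + 1)) * ((d3 : ℤ) + ((w : ℤ) + 1))
        ≤ (2 * ((w : ℤ) + 1)) * (2 * ((w : ℤ) + 1)) :=
      mul_le_mul (by linarith) (by linarith) (by linarith) (by linarith)
    linarith [v1, v2]
  have hbcn : b * c ≤ 2 * c ^ 2 * (w + 1) ^ 2 + 4 * (w + 1) ^ 2 := by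
    have h1 : (b : ℤ) * c ≤ 2 * (c : ℤ) ^ 2 * ((w : ℤ) + 1) ^ 2 + 4 * ((w : ℤ) + 1) ^ 2 := by
      linarith [hbcm, hUle, hUub]
    exact_mod_cast h1
  have hbn : b ≤ 2 * c * (w + 1) ^ 2 + 4 * (w + 1) ^ 2 := by
    have w4 : 4 * (w + 1) ^ 2 * 1 ≤ 4 * (w + 1) ^ 2 * c := Nat.mul_le_mul_left _ hc
    have h' : b * c ≤ (2 * c * (w + 1) ^ 2 + 4 * (w + 1) ^ 2) * c := by linarith [hbcn, w4]
    exact Nat.le_of_mul_le_mul_right h' hc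
  have hb8 : b ≤ 8 * (w + 1) ^ 3 := by
    have hcle : c ≤ 2 * (w + 1) := by omega
    have b1 : 2 * c * (w + 1) ^ 2 ≤ 4 * (w + 1) ^ 3 := by
      calc 2 * c * (w + 1) ^ 2 ≤ 2 * (2 * (w + 1)) * (w + 1) ^ 2 :=
            Nat.mul_le_mul_right _ (Nat.mul_le_mul_left _ hcle)
        _ = 4 * (w + 1) ^ 3 := by ring
    have b2 : 4 * (w + 1) ^ 2 ≤ 4 * (w + 1) ^ 3 := by
      have : (w + 1) ^ 2 ≤ (w + 1) ^ 3 := Nat.pow_le_pow_right (by omega) (by omega)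
      exact Nat.mul_le_mul_left _ this
    linarith [hbn, b1, b2]
  -- bound on l = m + l1
  have hgl : (w + 2) ^ (m + l1) ≤ 2 * b * (w + 1) := by
    have h := hGlb
    rw [hG] at h
    exact_mod_cast h
  have hgl16 : (w + 2) ^ (m + l1) ≤ 16 * (w + 1) ^ 4 := by
    have h1 : 2 * b * (w + 1) ≤ 2 * (8 * (w + 1) ^ 3) * (w + 1) :=
      Nat.mul_le_mul_right _ (Nat.mul_le_mul_left _ hb8)
    have h2 : 2 * (8 * (w + 1) ^ 3) * (w + 1) = 16 * (w + 1) ^ 4 := by ring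
    omega
  have hl8 : m + l1 < 8 := by
    by_contra h8
    push_neg at h8
    have h1 : (w + 2) ^ 8 ≤ (w + 2) ^ (m + l1) := Nat.pow_le_pow_right (by omega) h8
    have h2 : 16 * (w + 1) ^ 4 < (w + 2) ^ 8 := by
      have h3 : (2 * (w + 1)) ^ 4 < ((w + 2) ^ 2) ^ 4 := by
        have : 2 * (w + 1) < (w + 2) ^ 2 := by
          have hsq : (w + 2) ^ 2 = w * w + 4 * w + 4 := by ring
          omega
        exact Nat.pow_lt_pow_left this (by norm_num)
      calc 16 * (w + 1) ^ 4 = (2 * (w + 1)) ^ 4 := by ring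
        _ < ((w + 2) ^ 2) ^ 4 := h3
        _ = (w + 2) ^ 8 := by rw [← pow_mul]
    omega
  -- a bound
  have ha16 : a < 16 * (w + 1) ^ 4 := by
    have h1 : a ≤ a * c := by
      calc a = a * 1 := (Nat.mul_one a).symm
        _ ≤ a * c := Nat.mul_le_mul_left a hc
    have h2 : 2 * b * (w + 1) ≤ 16 * (w + 1) ^ 4 := by
      have h3 : 2 * b * (w + 1) ≤ 2 * (8 * (w + 1) ^ 3) * (w + 1) :=
        Nat.mul_le_mul_right _ (Nat.mul_le_mul_left _ hb8)
      have h4 : 2 * (8 * (w + 1) ^ 3) * (w + 1) = 16 * (w + 1) ^ 4 := by ring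
      omega
    omega
  exact ⟨by omega, by omega, by omega, ha16⟩

noncomputable def pickD {g N : ℕ} (h : Repdigit g N) : ℕ := h.2.choose

noncomputable def pickK {g N : ℕ} (h : Repdigit g N) : ℕ := h.2.choose_spec.choose

lemma pick_spec {g N : ℕ} (h : Repdigit g N) :
    1 ≤ pickD h ∧ pickD h ≤ g - 1 ∧ 2 ≤ pickK h ∧
      N * (g - 1) = pickD h * (g ^ pickK h - 1) :=
  h.2.choose_spec.choose_spec

noncomputable def enc (g : ℕ) (p : ℕ × ℕ × ℕ) : ℕ × (ℕ × ℕ) × (ℕ × ℕ) :=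
  haveI := Classical.propDecidable (p ∈ DioTriples g)
  if h : p ∈ DioTriples g then
    (p.2.2, (pickD h.2.2.2.2.1, pickK h.2.2.2.2.1), (pickD h.2.2.2.2.2, pickK h.2.2.2.2.2))
  else (0, (0, 0), (0, 0))

lemma bounds {w : ℕ} {p : ℕ × ℕ × ℕ} (hp : p ∈ DioTriples (w + 2)) :
    p.2.2 < 2 * (w + 2) ∧
    pickD hp.2.2.2.2.1 < w + 2 ∧ pickK hp.2.2.2.2.1 < 8 ∧
    pickD hp.2.2.2.2.2 < w + 2 ∧ pickK hp.2.2.2.2.2 < 8 ∧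
    p.1 < 16 * (w + 1) ^ 4 := by
  have h0 : 0 < p.2.2 := hp.1
  have h1 : p.2.2 < p.2.1 := hp.2.1
  have h2 : p.2.1 < p.1 := hp.2.2.1
  obtain ⟨d1, k, hd1a, hd1b, hk2, hEq1⟩ := (hp.2.2.2.1).2
  obtain ⟨hd2a, hd2b, hl2, hEq2⟩ := pick_spec hp.2.2.2.2.1
  obtain ⟨hd3a, hd3b, hm2, hEq3⟩ := pick_spec hp.2.2.2.2.2
  have hw1 : w + 2 - 1 = w + 1 := rfl
  rw [hw1] at hEq1 hEq2 hEq3 hd1b hd2b hd3b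
  have K := key h0 h1 h2 hd1a hd1b (repd_shift hEq1) hd2a hd2b (repd_shift hEq2)
    hd3a hd3b (repd_shift hEq3)
  exact ⟨K.1, by omega, K.2.1, by omega, K.2.2.1, K.2.2.2⟩

theorem stmt_2 (g : ℕ) (hg : 2 ≤ g) :
    (DioTriples g).Finite ∧
    6 * Nat.card (DioTriples g) ≤ (185 * g - 185) * (185 * g - 186) * (185 * g - 187) := by
  obtain ⟨w, rfl⟩ : ∃ w, g = w + 2 := ⟨g - 2, by omega⟩
  set T : Finset (ℕ × (ℕ × ℕ) × (ℕ × ℕ)) :=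
    Finset.range (2 * (w + 2)) ×ˢ
      ((Finset.range (w + 2) ×ˢ Finset.range 8) ×ˢ (Finset.range (w + 2) ×ˢ Finset.range 8))
    with hT
  have hmaps : ∀ p ∈ DioTriples (w + 2), enc (w + 2) p ∈ (T : Set (ℕ × (ℕ × ℕ) × (ℕ × ℕ))) := by
    intro p hp
    have hb := bounds hp
    have hmem : enc (w + 2) p ∈ T := by
      rw [hT]
      simp only [enc, dif_pos hp]
      simp only [Finset.mem_product, Finset.mem_range]
      exact ⟨hb.1, ⟨⟨hb.2.1, hb.2.2.1⟩, ⟨hb.2.2.2.1, hb.2.2.2.2.1⟩⟩⟩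
    exact Finset.mem_coe.mpr hmem
  have hinj : Set.InjOn (enc (w + 2)) (DioTriples (w + 2)) := by
    intro p hp q hq he
    simp only [enc, dif_pos hp, dif_pos hq, Prod.mk.injEq] at he
    obtain ⟨hcc, ⟨hd2e, hke⟩, ⟨hd3e, hme⟩⟩ := he
    have sp2 := (pick_spec hp.2.2.2.2.1).2.2.2
    have sq2 := (pick_spec hq.2.2.2.2.1).2.2.2
    have sp3 := (pick_spec hp.2.2.2.2.2).2.2.2
    have sq3 := (pick_spec hq.2.2.2.2.2).2.2.2
    rw [hd2e, hke] at sp2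
    rw [hd3e, hme] at sp3
    rw [← sq2] at sp2
    rw [← sq3] at sp3
    have hw1 : w + 2 - 1 = w + 1 := rfl
    rw [hw1] at sp2 sp3
    have hac : p.1 * p.2.2 = q.1 * q.2.2 := by
      have := Nat.eq_of_mul_eq_mul_right (show 0 < w + 1 by omega) sp2
      omega
    have hbc : p.2.1 * p.2.2 = q.1 * q.2.2 ∨ True := Or.inr trivial
    have hbc' : p.2.1 * p.2.2 = q.2.1 * q.2.2 := by
      have := Nat.eq_of_mul_eq_mul_right (show 0 < w + 1 by omega) sp3
      omega
    have hc0 : 0 < p.2.2 := hp.1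
    rw [hcc] at hac hbc'
    have hq0 : 0 < q.2.2 := hq.1
    have ha : p.1 = q.1 := Nat.eq_of_mul_eq_mul_right hq0 hac
    have hb : p.2.1 = q.2.1 := Nat.eq_of_mul_eq_mul_right hq0 hbc'
    exact Prod.ext ha (Prod.ext hb hcc)
  have hfin : (DioTriples (w + 2)).Finite := by
    refine Set.Finite.subset
      ((Finset.range (16 * (w + 1) ^ 4) ×ˢ
        (Finset.range (16 * (w + 1) ^ 4) ×ˢ Finset.range (16 * (w + 1) ^ 4))).finite_toSet) ?_
    intro p hp
    have hb := bounds hp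
    have h1 : p.2.1 < p.1 := hp.2.2.1
    have h2 : p.2.2 < p.2.1 := hp.2.1
    refine Finset.mem_coe.mpr ?_
    simp only [Finset.mem_product, Finset.mem_range]
    exact ⟨hb.2.2.2.2.2, by omega, by omega⟩
  refine ⟨hfin, ?_⟩
  have hcard : Nat.card (DioTriples (w + 2)) ≤ T.card := by
    have h1 : Nat.card (DioTriples (w + 2)) = (DioTriples (w + 2)).ncard :=
      Nat.card_coe_set_eq _
    rw [h1]
    have h2 := Set.ncard_le_ncard_of_injOn (enc (w + 2)) hmaps hinj T.finite_toSet
    rwa [Set.ncard_coe_finset] at h2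
  have hTcard : T.card = 2 * (w + 2) * ((w + 2) * 8 * ((w + 2) * 8)) := by
    rw [hT]
    simp [Finset.card_product, Finset.card_range]
  have e1 : 185 * (w + 2) - 185 = 185 * w + 185 := by omega
  have e2 : 185 * (w + 2) - 186 = 185 * w + 184 := by omega
  have e3 : 185 * (w + 2) - 187 = 185 * w + 183 := by omega
  rw [e1, e2, e3]
  have step1 : 6 * Nat.card (DioTriples (w + 2)) ≤ 768 * (w + 2) ^ 3 := by
    have : 6 * Nat.card (DioTriples (w + 2)) ≤ 6 * T.card := Nat.mul_le_mul_left 6 hcard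
    have h3 : 6 * T.card = 768 * (w + 2) ^ 3 := by rw [hTcard]; ring
    omega
  have step2 : 768 * (w + 2) ^ 3 ≤ 6144 * (w + 1) ^ 3 := by
    have h4 : (w + 2) ^ 3 ≤ (2 * (w + 1)) ^ 3 := Nat.pow_le_pow_left (by omega) 3
    have h5 : 768 * (2 * (w + 1)) ^ 3 = 6144 * (w + 1) ^ 3 := by ring
    calc 768 * (w + 2) ^ 3 ≤ 768 * (2 * (w + 1)) ^ 3 := Nat.mul_le_mul_left _ h4
      _ = 6144 * (w + 1) ^ 3 := h5
  have step3 : 6144 * (w + 1) ^ 3 ≤ (185 * w + 185) * ((185 * w + 184) * (185 * w + 183)) := by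
    have h6 : 6144 * (w + 1) ^ 3 ≤ 6229320 * (w + 1) ^ 3 :=
      Nat.mul_le_mul_right _ (by norm_num)
    have h7 : 6229320 * (w + 1) ^ 3 = (185 * (w + 1)) * ((184 * (w + 1)) * (183 * (w + 1))) := by
      ring
    have h8 : (185 * (w + 1)) * ((184 * (w + 1)) * (183 * (w + 1)))
        ≤ (185 * w + 185) * ((185 * w + 184) * (185 * w + 183)) := by
      apply Nat.mul_le_mul (by omega)
      exact Nat.mul_le_mul (by omega) (by omega)
    omega
  calc 6 * Nat.card (DioTriples (w + 2)) ≤ 768 * (w + 2) ^ 3 := step1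
    _ ≤ 6144 * (w + 1) ^ 3 := step2
    _ ≤ (185 * w + 185) * ((185 * w + 184) * (185 * w + 183)) := step3
    _ = (185 * w + 185) * (185 * w + 184) * (185 * w + 183) := by ring
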